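/- arXiv:1412.1373 — 2 statements merged into one kernel-verified Lean document; each statement's English description precedes it below -/
import Mathlib

section
/- Let p ≥ 1, let Σ : ℝ^p → PD_p(ℝ) assign to each point a real positive definite p×p matrix, let α : ℝ^p → (0,∞) and let a > 0. Define C(x,y) = π^{-p/2} det((Σ_x+Σ_y)/2)^{-1/2} ∫_0^∞ 2a² t^{−α(x)−α(y)−1} exp(−(Q_xy(x−y) + a²)/t²) dt. Then C(x,x) > 0 for every x, and for all x, y ∈ ℝ^p, writing ᾱ(x,y) = (α(x)+α(y))/2, the normalized kernel satisfies C(x,y) / ( √(C(x,x)) · √(C(y,y)) ) = φ_xy · ( Γ(ᾱ(x,y)) / √(Γ(α(x)) Γ(α(y))) ) · (1 + Q_xy(x−y)/a²)^{−ᾱ(x,y)}, where Γ denotes the real Gamma function. -/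
open MeasureTheory Matrix Real

/-- `Q_xy(h) = hᵀ ((Σx+Σy)/2)⁻¹ h`. -/
noncomputable def Qform {p : ℕ} (A B : Matrix (Fin p) (Fin p) ℝ) (h : Fin p → ℝ) : ℝ :=
  h ⬝ᵥ ((((2:ℝ)⁻¹ • (A + B))⁻¹).mulVec h)

/-- `φ_xy = det(Σx)^{1/4} det(Σy)^{1/4} det((Σx+Σy)/2)^{-1/2}`. -/
noncomputable def phiFactor {p : ℕ} (A B : Matrix (Fin p) (Fin p) ℝ) : ℝ :=
  A.det ^ ((1:ℝ) / 4) * B.det ^ ((1:ℝ) / 4) * ((2:ℝ)⁻¹ • (A + B)).det ^ (-(1:ℝ) / 2)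

lemma key_integral {s c : ℝ} (hs : 0 < s) (hc : 0 < c) :
    ∫ t in Set.Ioi (0:ℝ), t ^ (-s - 1) * Real.exp (-c / t ^ 2)
      = (1/2) * c ^ (-(s/2)) * Real.Gamma (s/2) := by
  have h2 : (-2 : ℝ) ≠ 0 := by norm_num
  have hsub := MeasureTheory.integral_comp_rpow_Ioi
      (fun y => y ^ (s/2 - 1) * Real.exp (-(c * y))) h2
  have hg := Real.integral_rpow_mul_exp_neg_mul_Ioi (half_pos hs) hc
  have heq : ∀ x ∈ Set.Ioi (0:ℝ),
      (|(-2:ℝ)| * x ^ ((-2:ℝ) - 1)) •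
        ((fun y => y ^ (s/2 - 1) * Real.exp (-(c * y))) (x ^ (-2:ℝ)))
      = 2 * (x ^ (-s - 1) * Real.exp (-c / x ^ 2)) := by
    intro x hx
    have hx0 : (0:ℝ) < x := hx
    simp only []
    have e1 : x ^ (-2:ℝ) = (x ^ 2)⁻¹ := by
      rw [Real.rpow_neg hx0.le, show (2:ℝ) = ((2:ℕ):ℝ) by norm_num, Real.rpow_natCast]
    have e2 : ((x:ℝ) ^ (-2:ℝ)) ^ (s/2 - 1) = x ^ ((-2) * (s/2 - 1)) :=
      (Real.rpow_mul hx0.le _ _).symm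
    have e4 : x ^ ((-2:ℝ) - 1) * x ^ ((-2) * (s/2 - 1)) = x ^ (-s - 1) := by
      rw [← Real.rpow_add hx0]; congr 1; ring
    have habs : |(-2:ℝ)| = 2 := by norm_num
    have e3 : -(c * (x ^ 2)⁻¹) = -c / x ^ 2 := by ring
    rw [smul_eq_mul, habs, e2, e1, e3]
    calc 2 * x ^ ((-2:ℝ) - 1) * (x ^ ((-2) * (s/2 - 1)) * Real.exp (-c / x ^ 2))
        = 2 * ((x ^ ((-2:ℝ) - 1) * x ^ ((-2) * (s/2 - 1))) * Real.exp (-c / x ^ 2)) := by ring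
      _ = 2 * (x ^ (-s - 1) * Real.exp (-c / x ^ 2)) := by rw [e4]
  have hmain : 2 * (∫ t in Set.Ioi (0:ℝ), t ^ (-s - 1) * Real.exp (-c / t ^ 2))
      = (1/c) ^ (s/2) * Real.Gamma (s/2) := by
    calc 2 * (∫ t in Set.Ioi (0:ℝ), t ^ (-s - 1) * Real.exp (-c / t ^ 2))
        = ∫ x in Set.Ioi (0:ℝ), 2 * (x ^ (-s - 1) * Real.exp (-c / x ^ 2)) :=
          (integral_const_mul 2 _).symm
      _ = ∫ x in Set.Ioi (0:ℝ), (|(-2:ℝ)| * x ^ ((-2:ℝ) - 1)) •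
            ((fun y => y ^ (s/2 - 1) * Real.exp (-(c * y))) (x ^ (-2:ℝ))) :=
          (setIntegral_congr_fun measurableSet_Ioi heq).symm
      _ = ∫ y in Set.Ioi (0:ℝ), y ^ (s/2 - 1) * Real.exp (-(c * y)) := hsub
      _ = (1/c) ^ (s/2) * Real.Gamma (s/2) := hg
  have hcc : ((1:ℝ)/c) ^ (s/2) = c ^ (-(s/2)) := by
    rw [one_div, ← Real.rpow_neg_one c, ← Real.rpow_mul hc.le]
    congr 1; ring
  rw [hcc] at hmain
  linarith

lemma posdef_avg {p : ℕ} {A B : Matrix (Fin p) (Fin p) ℝ} (hA : A.PosDef) (hB : B.PosDef) :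
    ((2:ℝ)⁻¹ • (A + B)).PosDef := by
  have h := hA.add hB
  refine Matrix.PosDef.of_dotProduct_mulVec_pos ?_ (fun x hx => ?_)
  · unfold Matrix.IsHermitian at *
    rw [conjTranspose_smul, h.1, star_trivial]
  · have h2 := h.dotProduct_mulVec_pos hx
    rw [smul_mulVec, dotProduct_smul, smul_eq_mul]
    positivity

lemma qform_nonneg {p : ℕ} {A B : Matrix (Fin p) (Fin p) ℝ} (hA : A.PosDef) (hB : B.PosDef)
    (h : Fin p → ℝ) : 0 ≤ Qform A B h := by
  have hM := (posdef_avg hA hB).inv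
  have := hM.posSemidef.dotProduct_mulVec_nonneg h
  simpa [Qform] using this

lemma log3 {u v w : ℝ} (hu : u ≠ 0) (hv : v ≠ 0) (hw : w ≠ 0) :
    Real.log (u * v * w) = Real.log u + Real.log v + Real.log w := by
  rw [Real.log_mul (mul_ne_zero hu hv) hw, Real.log_mul hu hv]

lemma main_alg {P dM dX dY a2 Q gx gy gxy pp αx αy : ℝ}
    (hP : 0 < P) (hdM : 0 < dM) (hdX : 0 < dX) (hdY : 0 < dY)
    (ha2 : 0 < a2) (hQ : 0 ≤ Q)
    (hgx : 0 < gx) (hgy : 0 < gy) (hgxy : 0 < gxy) :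
    (P ^ (-pp/2) * dM ^ (-(1:ℝ)/2) * (a2 * ((Q + a2) ^ (-((αx + αy)/2)) * gxy))) /
      (Real.sqrt (P ^ (-pp/2) * dX ^ (-(1:ℝ)/2) * (a2 * (a2 ^ (-αx) * gx))) *
       Real.sqrt (P ^ (-pp/2) * dY ^ (-(1:ℝ)/2) * (a2 * (a2 ^ (-αy) * gy)))) =
    (dX ^ ((1:ℝ)/4) * dY ^ ((1:ℝ)/4) * dM ^ (-(1:ℝ)/2)) *
      (gxy / Real.sqrt (gx * gy)) * (1 + Q / a2) ^ (-((αx + αy)/2)) := by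
  have hc : 0 < Q + a2 := by positivity
  have h1 : (0:ℝ) < 1 + Q / a2 := by positivity
  have hNx : 0 < P ^ (-pp/2) * dX ^ (-(1:ℝ)/2) * (a2 * (a2 ^ (-αx) * gx)) := by positivity
  have hNy : 0 < P ^ (-pp/2) * dY ^ (-(1:ℝ)/2) * (a2 * (a2 ^ (-αy) * gy)) := by positivity
  have hNum : 0 < P ^ (-pp/2) * dM ^ (-(1:ℝ)/2) * (a2 * ((Q + a2) ^ (-((αx + αy)/2)) * gxy)) := by
    positivity
  have hDen : 0 < Real.sqrt (P ^ (-pp/2) * dX ^ (-(1:ℝ)/2) * (a2 * (a2 ^ (-αx) * gx))) *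
      Real.sqrt (P ^ (-pp/2) * dY ^ (-(1:ℝ)/2) * (a2 * (a2 ^ (-αy) * gy))) :=
    mul_pos (Real.sqrt_pos.2 hNx) (Real.sqrt_pos.2 hNy)
  have hL : 0 < (P ^ (-pp/2) * dM ^ (-(1:ℝ)/2) * (a2 * ((Q + a2) ^ (-((αx + αy)/2)) * gxy))) /
      (Real.sqrt (P ^ (-pp/2) * dX ^ (-(1:ℝ)/2) * (a2 * (a2 ^ (-αx) * gx))) *
       Real.sqrt (P ^ (-pp/2) * dY ^ (-(1:ℝ)/2) * (a2 * (a2 ^ (-αy) * gy)))) :=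
    div_pos hNum hDen
  have hR : 0 < (dX ^ ((1:ℝ)/4) * dY ^ ((1:ℝ)/4) * dM ^ (-(1:ℝ)/2)) *
      (gxy / Real.sqrt (gx * gy)) * (1 + Q / a2) ^ (-((αx + αy)/2)) := by positivity
  refine Real.log_injOn_pos (Set.mem_Ioi.2 hL) (Set.mem_Ioi.2 hR) ?_
  have ln : Real.log (P ^ (-pp/2) * dM ^ (-(1:ℝ)/2) * (a2 * ((Q + a2) ^ (-((αx + αy)/2)) * gxy)))
      = (-pp/2) * Real.log P + (-(1:ℝ)/2) * Real.log dM +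
        (Real.log a2 + ((-((αx + αy)/2)) * Real.log (Q + a2) + Real.log gxy)) := by
    rw [log3 (by positivity) (by positivity) (by positivity),
      Real.log_mul (ne_of_gt ha2) (by positivity),
      Real.log_mul (by positivity) (ne_of_gt hgxy),
      Real.log_rpow hP, Real.log_rpow hdM, Real.log_rpow hc]
  have lx : Real.log (P ^ (-pp/2) * dX ^ (-(1:ℝ)/2) * (a2 * (a2 ^ (-αx) * gx)))
      = (-pp/2) * Real.log P + (-(1:ℝ)/2) * Real.log dX +
        (Real.log a2 + ((-αx) * Real.log a2 + Real.log gx)) := by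
    rw [log3 (by positivity) (by positivity) (by positivity),
      Real.log_mul (ne_of_gt ha2) (by positivity),
      Real.log_mul (by positivity) (ne_of_gt hgx),
      Real.log_rpow hP, Real.log_rpow hdX, Real.log_rpow ha2]
  have ly : Real.log (P ^ (-pp/2) * dY ^ (-(1:ℝ)/2) * (a2 * (a2 ^ (-αy) * gy)))
      = (-pp/2) * Real.log P + (-(1:ℝ)/2) * Real.log dY +
        (Real.log a2 + ((-αy) * Real.log a2 + Real.log gy)) := by
    rw [log3 (by positivity) (by positivity) (by positivity),
      Real.log_mul (ne_of_gt ha2) (by positivity),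
      Real.log_mul (by positivity) (ne_of_gt hgy),
      Real.log_rpow hP, Real.log_rpow hdY, Real.log_rpow ha2]
  have hq : (1:ℝ) + Q / a2 = (Q + a2) / a2 := by field_simp; ring
  have lr : Real.log ((dX ^ ((1:ℝ)/4) * dY ^ ((1:ℝ)/4) * dM ^ (-(1:ℝ)/2)) *
      (gxy / Real.sqrt (gx * gy)) * (1 + Q / a2) ^ (-((αx + αy)/2)))
      = (((1:ℝ)/4) * Real.log dX + ((1:ℝ)/4) * Real.log dY + (-(1:ℝ)/2) * Real.log dM) +
        (Real.log gxy - (Real.log gx + Real.log gy) / 2) +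
        (-((αx + αy)/2)) * (Real.log (Q + a2) - Real.log a2) := by
    rw [log3 (by positivity) (by positivity) (by positivity),
      log3 (by positivity) (by positivity) (by positivity),
      Real.log_div (ne_of_gt hgxy) (by positivity),
      Real.log_sqrt (by positivity),
      Real.log_mul (ne_of_gt hgx) (ne_of_gt hgy),
      Real.log_rpow hdX, Real.log_rpow hdY, Real.log_rpow hdM,
      hq, Real.log_rpow (by rw [← hq]; exact h1), Real.log_div (ne_of_gt hc) (ne_of_gt ha2)]
  rw [Real.log_div (ne_of_gt hNum) (ne_of_gt hDen),
    Real.log_mul (ne_of_gt (Real.sqrt_pos.2 hNx)) (ne_of_gt (Real.sqrt_pos.2 hNy)),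
    Real.log_sqrt hNx.le, Real.log_sqrt hNy.le, ln, lx, ly, lr]
  ring

/-- normalizing the inverse-gamma mixture yields the non-stationary
Cauchy correlation with spatially varying long-range parameter. -/
theorem normalized_cauchy_nonstationary (p : ℕ) (hp : 1 ≤ p)
    (S : (Fin p → ℝ) → Matrix (Fin p) (Fin p) ℝ) (hS : ∀ x, (S x).PosDef)
    (α : (Fin p → ℝ) → ℝ) (hα : ∀ x, 0 < α x) (a : ℝ) (ha : 0 < a)
    (C : (Fin p → ℝ) → (Fin p → ℝ) → ℝ)
    (hC : ∀ x y, C x y = Real.pi ^ (-(p : ℝ) / 2) *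
      ((2:ℝ)⁻¹ • (S x + S y)).det ^ (-(1:ℝ) / 2) *
      ∫ t in Set.Ioi (0:ℝ),
        2 * a ^ 2 * t ^ (-(α x) - α y - 1) *
          Real.exp (-(Qform (S x) (S y) (x - y) + a ^ 2) / t ^ 2)) :
    (∀ x : Fin p → ℝ, 0 < C x x) ∧
    ∀ x y : Fin p → ℝ,
      C x y / (Real.sqrt (C x x) * Real.sqrt (C y y)) =
        phiFactor (S x) (S y) *
          (Real.Gamma ((α x + α y) / 2) /
            Real.sqrt (Real.Gamma (α x) * Real.Gamma (α y))) *
          (1 + Qform (S x) (S y) (x - y) / a ^ 2) ^ (-((α x + α y) / 2)) := by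
  have hQ : ∀ x y : Fin p → ℝ, 0 ≤ Qform (S x) (S y) (x - y) :=
    fun x y => qform_nonneg (hS x) (hS y) _
  have hCform : ∀ x y : Fin p → ℝ, C x y = Real.pi ^ (-(p : ℝ) / 2) *
      ((2:ℝ)⁻¹ • (S x + S y)).det ^ (-(1:ℝ) / 2) *
      (a ^ 2 * ((Qform (S x) (S y) (x - y) + a ^ 2) ^ (-((α x + α y) / 2)) *
        Real.Gamma ((α x + α y) / 2))) := by
    intro x y
    rw [hC]
    have hc : 0 < Qform (S x) (S y) (x - y) + a ^ 2 := by
      have := hQ x y; positivity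
    have hfun : ∀ t : ℝ,
        2 * a ^ 2 * t ^ (-(α x) - α y - 1) *
          Real.exp (-(Qform (S x) (S y) (x - y) + a ^ 2) / t ^ 2)
        = (2 * a ^ 2) * (t ^ (-(α x + α y) - 1) *
          Real.exp (-(Qform (S x) (S y) (x - y) + a ^ 2) / t ^ 2)) := by
      intro t
      rw [show -(α x) - α y - 1 = -(α x + α y) - 1 by ring]
      ring
    simp_rw [hfun]
    rw [integral_const_mul,
      key_integral (by have := hα x; have := hα y; positivity) hc]
    ring
  have hSavg : ∀ x : Fin p → ℝ, (2:ℝ)⁻¹ • (S x + S x) = S x := by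
    intro x
    rw [← two_smul ℝ (S x), smul_smul]
    norm_num
  have hxx : ∀ x : Fin p → ℝ, C x x = Real.pi ^ (-(p : ℝ) / 2) *
      (S x).det ^ (-(1:ℝ) / 2) *
      (a ^ 2 * ((a ^ 2 : ℝ) ^ (-(α x)) * Real.Gamma (α x))) := by
    intro x
    rw [hCform x x]
    have h0 : Qform (S x) (S x) (x - x) = 0 := by simp [Qform]
    rw [h0, hSavg x, show (α x + α x) / 2 = α x by ring]
    norm_num
  have hpos : ∀ x : Fin p → ℝ, 0 < C x x := by
    intro x
    rw [hxx x]
    have hd := (hS x).det_pos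
    have hg := Real.Gamma_pos_of_pos (hα x)
    have hπ := Real.pi_pos
    positivity
  refine ⟨hpos, fun x y => ?_⟩
  rw [hCform x y, hxx x, hxx y]
  have halg := main_alg (P := Real.pi) (dM := ((2:ℝ)⁻¹ • (S x + S y)).det)
    (dX := (S x).det) (dY := (S y).det) (a2 := a ^ 2)
    (Q := Qform (S x) (S y) (x - y)) (gx := Real.Gamma (α x)) (gy := Real.Gamma (α y))
    (gxy := Real.Gamma ((α x + α y) / 2)) (pp := (p : ℝ)) (αx := α x) (αy := α y)
    Real.pi_pos (posdef_avg (hS x) (hS y)).det_pos (hS x).det_pos (hS y).det_pos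
    (by positivity) (hQ x y) (Real.Gamma_pos_of_pos (hα x)) (Real.Gamma_pos_of_pos (hα y))
    (Real.Gamma_pos_of_pos (by have := hα x; have := hα y; positivity))
  rw [phiFactor]
  convert halg using 3 <;> ring
end

section
/- Let p ≥ 1, let Σ : ℝ^p → PD_p(ℝ) assign to each point a real positive definite p×p matrix, let ξ be a finite positive measure on (0,∞), and let σ : ℝ^p → ℝ be any function. Then the non-stationary covariance kernel C^{NS}(x,y) = σ(x) σ(y) φ_xy ∫_0^∞ exp(−Q_xy(x−y)/t²) ξ(dt) is positive semidefinite on ℝ^p × ℝ^p: for every n ∈ ℕ, all points x_1, …, x_n ∈ ℝ^p and all real coefficients c_1, …, c_n, ∑_{i,j} c_i c_j C^{NS}(x_i, x_j) ≥ 0. -/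
open MeasureTheory Matrix Real

namespace NSAux

variable {p : ℕ}

/-! ### Basic positive-definite matrix facts -/

lemma symm_of_posDef {M : Matrix (Fin p) (Fin p) ℝ} (hM : M.PosDef) : Mᵀ = M := by
  rw [← Matrix.conjTranspose_eq_transpose_of_trivial]; exact hM.1

lemma posDef_smul {c : ℝ} (hc : 0 < c) {M : Matrix (Fin p) (Fin p) ℝ} (hM : M.PosDef) :
    (c • M).PosDef := by
  refine ⟨?_, fun x hx => ?_⟩
  · show (c • M)ᴴ = c • M
    rw [conjTranspose_smul]
    simp [symm_of_posDef hM, Matrix.conjTranspose_eq_transpose_of_trivial]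
  · exact (hM.smul hc).2 hx

lemma q_nonneg {M : Matrix (Fin p) (Fin p) ℝ} (hM : M.PosSemidef) (v : Fin p → ℝ) :
    0 ≤ v ⬝ᵥ M.mulVec v := by
  simpa [star_trivial] using hM.dotProduct_mulVec_nonneg v

/-! ### The basic Gaussian integral on `Fin p → ℝ` -/

noncomputable def Jp (p : ℕ) : ℝ := ∫ v : Fin p → ℝ, rexp (-∑ i, v i ^ 2)

lemma expsum_eq (v : Fin p → ℝ) : rexp (-∑ i, v i ^ 2) = ∏ i, rexp (-(v i)^2) := by
  rw [← Real.exp_sum]; congr 1; rw [← Finset.sum_neg_distrib]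

lemma integrable_G : Integrable (fun v : Fin p → ℝ => rexp (-∑ i, v i ^ 2)) := by
  simp_rw [expsum_eq]
  exact Integrable.fintype_prod (f := fun (_ : Fin p) (x : ℝ) => rexp (-x^2))
    (fun i => by simpa using integrable_exp_neg_mul_sq (one_pos))

lemma Jp_pos : 0 < Jp p := by
  rw [Jp, integral_pos_iff_support_of_nonneg (fun v => (Real.exp_pos _).le) integrable_G]
  have : Function.support (fun v : Fin p → ℝ => rexp (-∑ i, v i ^ 2)) = Set.univ := by
    ext v; simp [(Real.exp_pos _).ne']
  rw [this]
  exact isOpen_univ.measure_pos volume Set.univ_nonempty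

lemma integrable_comp_mulVec {R : Matrix (Fin p) (Fin p) ℝ} (hR : R.det ≠ 0)
    {f : (Fin p → ℝ) → ℝ} (hf : Continuous f) (h : Integrable f) :
    Integrable (fun v => f (R.mulVec v)) := by
  have hdet : LinearMap.det (Matrix.toLin' R) ≠ 0 := by rwa [LinearMap.det_toLin']
  have hmap := Real.map_linearMap_volume_pi_eq_smul_volume_pi hdet
  have hmeas : AEMeasurable (Matrix.toLin' R) volume :=
    (LinearMap.continuous_of_finiteDimensional _).aemeasurable
  have h2 : Integrable f (Measure.map (Matrix.toLin' R) volume) := by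
    rw [hmap]
    exact h.smul_measure ENNReal.ofReal_ne_top
  rw [integrable_map_measure hf.aestronglyMeasurable hmeas] at h2
  simpa [Function.comp_def, Matrix.toLin'_apply] using h2

lemma integral_comp_mulVec {R : Matrix (Fin p) (Fin p) ℝ} (hR : R.det ≠ 0)
    {f : (Fin p → ℝ) → ℝ} (hf : Continuous f) :
    ∫ v, f (R.mulVec v) = |R.det|⁻¹ * ∫ v, f v := by
  have hdet : LinearMap.det (Matrix.toLin' R) ≠ 0 := by rwa [LinearMap.det_toLin']
  have hmap := Real.map_linearMap_volume_pi_eq_smul_volume_pi hdet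
  have hmeas : AEMeasurable (Matrix.toLin' R) volume :=
    (LinearMap.continuous_of_finiteDimensional _).aemeasurable
  have h2 := MeasureTheory.integral_map hmeas (f := f) hf.aestronglyMeasurable
  rw [hmap, integral_smul_measure, ENNReal.toReal_ofReal (abs_nonneg _),
    LinearMap.det_toLin'] at h2
  simp only [Matrix.toLin'_apply] at h2
  rw [← h2, abs_inv, smul_eq_mul]

open scoped MatrixOrder in
noncomputable def _root_.Matrix.PosSemidef.sqrt {M : Matrix (Fin p) (Fin p) ℝ}
    (_ : M.PosSemidef) : Matrix (Fin p) (Fin p) ℝ := CFC.sqrt M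

open scoped MatrixOrder in
lemma _root_.Matrix.PosSemidef.sqrt_mul_self {M : Matrix (Fin p) (Fin p) ℝ}
    (hM : M.PosSemidef) : hM.sqrt * hM.sqrt = M := CFC.sqrt_mul_sqrt_self M hM.nonneg

open scoped MatrixOrder in
lemma _root_.Matrix.PosSemidef.posSemidef_sqrt {M : Matrix (Fin p) (Fin p) ℝ}
    (hM : M.PosSemidef) : hM.sqrt.PosSemidef := (CFC.sqrt_nonneg M).posSemidef

lemma quad_eq_sum_sq {M : Matrix (Fin p) (Fin p) ℝ} (hM : M.PosDef) (v : Fin p → ℝ) :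
    v ⬝ᵥ M.mulVec v = ∑ i, (hM.posSemidef.sqrt.mulVec v) i ^ 2 := by
  set R := hM.posSemidef.sqrt with hRdef
  have hRR : R * R = M := hM.posSemidef.sqrt_mul_self
  have hRsym : Rᵀ = R := by
    rw [← Matrix.conjTranspose_eq_transpose_of_trivial]
    exact hM.posSemidef.posSemidef_sqrt.1
  have hv : v ᵥ* R = R *ᵥ v := by
    conv_lhs => rw [← hRsym]
    rw [Matrix.vecMul_transpose]
  calc v ⬝ᵥ M.mulVec v = v ⬝ᵥ (R.mulVec (R.mulVec v)) := by
        rw [Matrix.mulVec_mulVec, hRR]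
    _ = (R.mulVec v) ⬝ᵥ (R.mulVec v) := by
        rw [Matrix.dotProduct_mulVec, hv]
    _ = ∑ i, (R.mulVec v) i ^ 2 := by simp [dotProduct, sq]

lemma gauss_integrable {M : Matrix (Fin p) (Fin p) ℝ} (hM : M.PosDef) :
    Integrable (fun v : Fin p → ℝ => rexp (-(v ⬝ᵥ M.mulVec v))) := by
  set R := hM.posSemidef.sqrt with hRdef
  have hdR : R.det * R.det = M.det := by rw [← Matrix.det_mul, hM.posSemidef.sqrt_mul_self]
  have hRne : R.det ≠ 0 := by
    intro h; rw [h, mul_zero] at hdR; exact hM.det_pos.ne' hdR.symm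
  have key : (fun v : Fin p → ℝ => rexp (-(v ⬝ᵥ M.mulVec v)))
      = fun v => rexp (-∑ i, (R.mulVec v) i ^ 2) := by
    funext v; rw [quad_eq_sum_sq hM]
  have h2 : Integrable (fun v : Fin p → ℝ => rexp (-∑ i, (R.mulVec v) i ^ 2)) :=
    integrable_comp_mulVec (f := fun w : Fin p → ℝ => rexp (-∑ i, w i ^ 2)) hRne
      (by continuity) integrable_G
  rw [key]; exact h2

lemma gauss_integral {M : Matrix (Fin p) (Fin p) ℝ} (hM : M.PosDef) :
    ∫ v : Fin p → ℝ, rexp (-(v ⬝ᵥ M.mulVec v)) = M.det ^ (-(1:ℝ)/2) * Jp p := by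
  set R := hM.posSemidef.sqrt with hRdef
  have hdR : R.det * R.det = M.det := by rw [← Matrix.det_mul, hM.posSemidef.sqrt_mul_self]
  have hRdet : |R.det| = Real.sqrt M.det := by
    rw [← hdR, Real.sqrt_mul_self_eq_abs]
  have hRne : R.det ≠ 0 := by
    intro h; rw [h, mul_zero] at hdR; exact hM.det_pos.ne' hdR.symm
  have key : (fun v : Fin p → ℝ => rexp (-(v ⬝ᵥ M.mulVec v)))
      = fun v => rexp (-∑ i, (R.mulVec v) i ^ 2) := by
    funext v; rw [quad_eq_sum_sq hM]
  have h3 : ∫ v : Fin p → ℝ, rexp (-∑ i, (R.mulVec v) i ^ 2)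
      = |R.det|⁻¹ * ∫ v : Fin p → ℝ, rexp (-∑ i, v i ^ 2) :=
    integral_comp_mulVec (f := fun w : Fin p → ℝ => rexp (-∑ i, w i ^ 2)) hRne (by continuity)
  rw [key, h3, ← Jp, hRdet]
  congr 1
  rw [show (-(1:ℝ)/2) = -(1/2 : ℝ) by norm_num, Real.rpow_neg hM.det_pos.le,
    ← Real.sqrt_eq_rpow]

/-! ### Completing the square -/

lemma dotMul {M : Matrix (Fin p) (Fin p) ℝ} (hM : Mᵀ = M) (v x : Fin p → ℝ) :
    (M *ᵥ v) ⬝ᵥ x = v ⬝ᵥ (M *ᵥ x) := by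
  rw [Matrix.dotProduct_mulVec]
  congr 1
  conv_rhs => rw [← hM]
  rw [Matrix.vecMul_transpose]

lemma dot_symm {C : Matrix (Fin p) (Fin p) ℝ} (hC : Cᵀ = C) (x y : Fin p → ℝ) :
    x ⬝ᵥ C *ᵥ y = y ⬝ᵥ C *ᵥ x := by
  rw [← dotMul hC x y, dotProduct_comm]

lemma expand_sub {M : Matrix (Fin p) (Fin p) ℝ} (hM : Mᵀ = M) (x y : Fin p → ℝ) :
    (x - y) ⬝ᵥ M *ᵥ (x - y)
      = x ⬝ᵥ M *ᵥ x - 2 * (x ⬝ᵥ M *ᵥ y) + y ⬝ᵥ M *ᵥ y := by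
  rw [Matrix.mulVec_sub, sub_dotProduct, dotProduct_sub, dotProduct_sub,
    dot_symm hM y x]
  ring

lemma complete_square {A B : Matrix (Fin p) (Fin p) ℝ} (hA : A.PosDef) (hB : B.PosDef)
    (a b u : Fin p → ℝ) :
    (u - a) ⬝ᵥ A *ᵥ (u - a) + (u - b) ⬝ᵥ B *ᵥ (u - b)
      = (u - (A + B)⁻¹ *ᵥ (A *ᵥ a + B *ᵥ b)) ⬝ᵥ (A + B) *ᵥ
          (u - (A + B)⁻¹ *ᵥ (A *ᵥ a + B *ᵥ b))
        + (a - b) ⬝ᵥ (A * (A + B)⁻¹ * B) *ᵥ (a - b) := by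
  have hAsym : Aᵀ = A := symm_of_posDef hA
  have hBsym : Bᵀ = B := symm_of_posDef hB
  set S := A + B with hSdef
  have hS : S.PosDef := hA.add hB
  have hSsym : Sᵀ = S := symm_of_posDef hS
  have hdet : IsUnit S.det := hS.det_pos.ne'.isUnit
  have hSS : S * S⁻¹ = 1 := Matrix.mul_nonsing_inv S hdet
  have hSS' : S⁻¹ * S = 1 := Matrix.nonsing_inv_mul S hdet
  have hSinvsym : (S⁻¹)ᵀ = S⁻¹ := by rw [Matrix.transpose_nonsing_inv, hSsym]
  set C := A * S⁻¹ * B with hCdef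
  have hBS : B = S - A := by rw [hSdef, add_sub_cancel_left]
  have idsym : B * S⁻¹ * A = C := by
    have h1 : B * S⁻¹ * A = A - A * S⁻¹ * A := by
      conv_lhs => rw [hBS]
      rw [sub_mul, sub_mul, hSS, one_mul]
    have h2 : C = A - A * S⁻¹ * A := by
      rw [hCdef]
      conv_lhs => rw [hBS]
      rw [mul_sub, mul_assoc A S⁻¹ S, hSS', mul_one, mul_assoc]
    rw [h1, h2]
  have hCsym : Cᵀ = C := by
    rw [hCdef, Matrix.transpose_mul, Matrix.transpose_mul, hAsym, hBsym, hSinvsym,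
      ← mul_assoc, idsym]
  have idAA : A * S⁻¹ * A = A - C := by
    refine eq_sub_of_add_eq ?_
    rw [hCdef, ← mul_add, ← hSdef, mul_assoc, hSS', mul_one]
  have idBB : B * S⁻¹ * B = B - C := by
    refine eq_sub_of_add_eq ?_
    rw [← idsym, add_comm, ← mul_add, ← hSdef, mul_assoc, hSS', mul_one]
  set w := A *ᵥ a + B *ᵥ b with hwdef
  set m := S⁻¹ *ᵥ w with hmdef
  have hSm : S *ᵥ m = w := by
    rw [hmdef, Matrix.mulVec_mulVec, hSS, Matrix.one_mulVec]
  have f1 : u ⬝ᵥ S *ᵥ u = u ⬝ᵥ A *ᵥ u + u ⬝ᵥ B *ᵥ u := by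
    rw [hSdef, Matrix.add_mulVec, dotProduct_add]
  have f2 : u ⬝ᵥ S *ᵥ m = u ⬝ᵥ A *ᵥ a + u ⬝ᵥ B *ᵥ b := by
    rw [hSm, hwdef, dotProduct_add]
  have tlem : ∀ (M N : Matrix (Fin p) (Fin p) ℝ), Mᵀ = M → ∀ x y : Fin p → ℝ,
      (M *ᵥ x) ⬝ᵥ S⁻¹ *ᵥ (N *ᵥ y) = x ⬝ᵥ (M * S⁻¹ * N) *ᵥ y := by
    intro M N hM x y
    rw [Matrix.mulVec_mulVec, dotMul hM, Matrix.mulVec_mulVec, ← mul_assoc]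
  have f4 : m ⬝ᵥ S *ᵥ m
      = (a ⬝ᵥ A *ᵥ a - a ⬝ᵥ C *ᵥ a) + 2 * (a ⬝ᵥ C *ᵥ b)
        + (b ⬝ᵥ B *ᵥ b - b ⬝ᵥ C *ᵥ b) := by
    have e0 : m ⬝ᵥ S *ᵥ m = w ⬝ᵥ S⁻¹ *ᵥ w := by
      rw [hSm, dotProduct_comm, hmdef]
    rw [e0]
    have e1 : w ⬝ᵥ S⁻¹ *ᵥ w
        = (A *ᵥ a) ⬝ᵥ S⁻¹ *ᵥ (A *ᵥ a) + (A *ᵥ a) ⬝ᵥ S⁻¹ *ᵥ (B *ᵥ b)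
          + (B *ᵥ b) ⬝ᵥ S⁻¹ *ᵥ (A *ᵥ a) + (B *ᵥ b) ⬝ᵥ S⁻¹ *ᵥ (B *ᵥ b) := by
      rw [hwdef, Matrix.mulVec_add, add_dotProduct, dotProduct_add, dotProduct_add]
      ring
    rw [e1, tlem A A hAsym, tlem A B hAsym, tlem B A hBsym, tlem B B hBsym,
      idAA, idBB, idsym, dot_symm hCsym b a, Matrix.sub_mulVec, Matrix.sub_mulVec,
      dotProduct_sub, dotProduct_sub]
    ring
  rw [expand_sub hAsym u a, expand_sub hBsym u b, expand_sub hSsym u m,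
    expand_sub hCsym a b, f1, f2, f4]
  ring

/-! ### Product of two gaussians -/

lemma prod_eq_shift {A B : Matrix (Fin p) (Fin p) ℝ} (hA : A.PosDef) (hB : B.PosDef)
    (a b : Fin p → ℝ) :
    (fun u : Fin p → ℝ => rexp (-((u - a) ⬝ᵥ A *ᵥ (u - a))) * rexp (-((u - b) ⬝ᵥ B *ᵥ (u - b))))
      = fun u => rexp (-((a - b) ⬝ᵥ (A * (A + B)⁻¹ * B) *ᵥ (a - b)))
          * rexp (-((u - (A + B)⁻¹ *ᵥ (A *ᵥ a + B *ᵥ b)) ⬝ᵥ (A + B) *ᵥ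
              (u - (A + B)⁻¹ *ᵥ (A *ᵥ a + B *ᵥ b)))) := by
  funext u
  rw [← Real.exp_add, ← Real.exp_add]
  congr 1
  have h := complete_square hA hB a b u
  linarith

lemma gauss_prod_integrable {A B : Matrix (Fin p) (Fin p) ℝ} (hA : A.PosDef) (hB : B.PosDef)
    (a b : Fin p → ℝ) :
    Integrable (fun u : Fin p → ℝ =>
      rexp (-((u - a) ⬝ᵥ A *ᵥ (u - a))) * rexp (-((u - b) ⬝ᵥ B *ᵥ (u - b)))) := by
  rw [prod_eq_shift hA hB a b]
  set m := (A + B)⁻¹ *ᵥ (A *ᵥ a + B *ᵥ b)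
  have h1 : Integrable (fun u : Fin p → ℝ => rexp (-((u - m) ⬝ᵥ (A + B) *ᵥ (u - m)))) :=
    Integrable.comp_sub_right (gauss_integrable (hA.add hB)) m
  exact h1.const_mul _

lemma gauss_prod_integral {A B : Matrix (Fin p) (Fin p) ℝ} (hA : A.PosDef) (hB : B.PosDef)
    (a b : Fin p → ℝ) :
    ∫ u : Fin p → ℝ, rexp (-((u - a) ⬝ᵥ A *ᵥ (u - a))) * rexp (-((u - b) ⬝ᵥ B *ᵥ (u - b)))
      = rexp (-((a - b) ⬝ᵥ (A * (A + B)⁻¹ * B) *ᵥ (a - b)))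
          * ((A + B).det ^ (-(1:ℝ)/2) * Jp p) := by
  rw [prod_eq_shift hA hB a b]
  set m := (A + B)⁻¹ *ᵥ (A *ᵥ a + B *ᵥ b)
  rw [integral_const_mul]
  congr 1
  have h2 : ∫ u : Fin p → ℝ, rexp (-((u - m) ⬝ᵥ (A + B) *ᵥ (u - m)))
      = ∫ u : Fin p → ℝ, rexp (-(u ⬝ᵥ (A + B) *ᵥ u)) :=
    integral_sub_right_eq_self (fun u : Fin p → ℝ => rexp (-(u ⬝ᵥ (A + B) *ᵥ u))) m
  rw [h2, gauss_integral (hA.add hB)]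

/-! ### Matrix identities for the scaled matrices -/

lemma inv_add_inv_eq {A B : Matrix (Fin p) (Fin p) ℝ} (hA : A.PosDef) (hB : B.PosDef) :
    A⁻¹ + B⁻¹ = B⁻¹ * (A + B) * A⁻¹ := by
  have hAu : IsUnit A.det := hA.det_pos.ne'.isUnit
  have hBu : IsUnit B.det := hB.det_pos.ne'.isUnit
  rw [mul_add, add_mul, mul_assoc B⁻¹ A A⁻¹, Matrix.mul_nonsing_inv A hAu, mul_one,
    Matrix.nonsing_inv_mul B hBu, one_mul, add_comm]

lemma inv_of_inv_add_inv {A B : Matrix (Fin p) (Fin p) ℝ} (hA : A.PosDef) (hB : B.PosDef) :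
    (A⁻¹ + B⁻¹)⁻¹ = A * (A + B)⁻¹ * B := by
  have hAu : IsUnit A.det := hA.det_pos.ne'.isUnit
  have hBu : IsUnit B.det := hB.det_pos.ne'.isUnit
  rw [inv_add_inv_eq hA hB, Matrix.mul_inv_rev, Matrix.mul_inv_rev,
    Matrix.nonsing_inv_nonsing_inv A hAu, Matrix.nonsing_inv_nonsing_inv B hBu, mul_assoc]

lemma scaled_C {A B : Matrix (Fin p) (Fin p) ℝ} (hA : A.PosDef) (hB : B.PosDef)
    {c : ℝ} (hc : 0 < c) :
    (c • A⁻¹) * ((c • A⁻¹) + (c • B⁻¹))⁻¹ * (c • B⁻¹) = c • (A + B)⁻¹ := by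
  have hAu : IsUnit A.det := hA.det_pos.ne'.isUnit
  have hBu : IsUnit B.det := hB.det_pos.ne'.isUnit
  have hsum : (A⁻¹ + B⁻¹).PosDef := hA.inv.add hB.inv
  haveI : Invertible c := invertibleOfNonzero hc.ne'
  have h1 : ((c • A⁻¹) + (c • B⁻¹)) = c • (A⁻¹ + B⁻¹) := (smul_add c _ _).symm
  rw [h1, Matrix.inv_smul (A⁻¹ + B⁻¹) c hsum.det_pos.ne'.isUnit, invOf_eq_inv,
    inv_of_inv_add_inv hA hB]
  simp only [smul_mul_assoc, mul_smul_comm, smul_smul]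
  rw [show c * (c⁻¹ * c) = c by field_simp]
  congr 1
  simp only [← mul_assoc]
  rw [Matrix.nonsing_inv_mul A hAu, one_mul, mul_assoc, Matrix.mul_nonsing_inv B hBu, mul_one]

lemma scaled_det {A B : Matrix (Fin p) (Fin p) ℝ} (hA : A.PosDef) (hB : B.PosDef)
    {c : ℝ} (hc : 0 < c) :
    ((c • A⁻¹) + (c • B⁻¹)).det = c^p * ((A.det)⁻¹ * (B.det)⁻¹ * (A + B).det) := by
  rw [← smul_add, Matrix.det_smul, Fintype.card_fin, inv_add_inv_eq hA hB,
    Matrix.det_mul, Matrix.det_mul, Matrix.det_nonsing_inv, Matrix.det_nonsing_inv,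
    Ring.inverse_eq_inv']
  ring

lemma Qform_eq {A B : Matrix (Fin p) (Fin p) ℝ} (hA : A.PosDef) (hB : B.PosDef)
    (h : Fin p → ℝ) :
    Qform A B h = 2 * (h ⬝ᵥ (A + B)⁻¹ *ᵥ h) := by
  rw [Qform]
  haveI : Invertible ((2:ℝ)⁻¹) := invertibleOfNonzero (by norm_num)
  rw [Matrix.inv_smul (A + B) ((2:ℝ)⁻¹) (hA.add hB).det_pos.ne'.isUnit, invOf_eq_inv, inv_inv,
    smul_mulVec, dotProduct_smul, smul_eq_mul]

lemma Qform_nonneg {A B : Matrix (Fin p) (Fin p) ℝ} (hA : A.PosDef) (hB : B.PosDef)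
    (h : Fin p → ℝ) : 0 ≤ Qform A B h := by
  rw [Qform_eq hA hB]
  have : ((A + B)⁻¹).PosSemidef := (hA.add hB).inv.posSemidef
  have := q_nonneg this h
  linarith

/-! ### rpow arithmetic -/

lemma rpow_arith (p : ℕ) {dA dB D J c : ℝ} (hdA : 0 < dA) (hdB : 0 < dB) (hD : 0 < D)
    (hJ : 0 < J) (hc : 0 < c) (X : ℝ) :
    dA ^ ((1:ℝ)/4) * dB ^ ((1:ℝ)/4) * (((2:ℝ)⁻¹)^p * D) ^ (-(1:ℝ)/2) * X
      = (((2:ℝ)^p * c^p) ^ ((1:ℝ)/2) / J) * (dA ^ (-(1:ℝ)/4) * dB ^ (-(1:ℝ)/4))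
        * (X * ((c^p * (dA⁻¹ * dB⁻¹ * D)) ^ (-(1:ℝ)/2) * J)) := by
  rw [Real.mul_rpow (by positivity) hD.le,
    Real.mul_rpow (by positivity) (by positivity),
    Real.mul_rpow (by positivity) (by positivity),
    Real.mul_rpow (by positivity) hD.le,
    Real.mul_rpow (by positivity) (by positivity),
    Real.inv_rpow hdA.le, Real.inv_rpow hdB.le]
  have e2 : (((2:ℝ)⁻¹)^p) ^ (-(1:ℝ)/2) = (((2:ℝ)^p) ^ ((1:ℝ)/2)) := by
    rw [inv_pow, Real.inv_rpow (by positivity), neg_div, Real.rpow_neg (by positivity), inv_inv]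
  have eA : dA ^ (-(1:ℝ)/4) = (dA ^ ((1:ℝ)/4))⁻¹ := by
    rw [neg_div, Real.rpow_neg hdA.le]
  have eB : dB ^ (-(1:ℝ)/4) = (dB ^ ((1:ℝ)/4))⁻¹ := by
    rw [neg_div, Real.rpow_neg hdB.le]
  have eA2 : (dA ^ (-(1:ℝ)/2))⁻¹ = dA ^ ((1:ℝ)/4) * dA ^ ((1:ℝ)/4) := by
    rw [neg_div, Real.rpow_neg hdA.le, inv_inv, ← Real.rpow_add hdA]; norm_num
  have eB2 : (dB ^ (-(1:ℝ)/2))⁻¹ = dB ^ ((1:ℝ)/4) * dB ^ ((1:ℝ)/4) := by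
    rw [neg_div, Real.rpow_neg hdB.le, inv_inv, ← Real.rpow_add hdB]; norm_num
  have ec : (c^p : ℝ) ^ (-(1:ℝ)/2) = ((c^p) ^ ((1:ℝ)/2))⁻¹ := by
    rw [neg_div, Real.rpow_neg (by positivity)]
  rw [e2, eA, eB, eA2, eB2, ec]
  have h1 : dA ^ (-(1:ℝ)/2) ≠ 0 := by positivity
  have h2 : dB ^ (-(1:ℝ)/2) ≠ 0 := by positivity
  have h3 : ((c^p : ℝ) ^ ((1:ℝ)/2)) ≠ 0 := by positivity
  have h4 : dA ^ ((1:ℝ)/4) ≠ 0 := by positivity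
  have h5 : dB ^ ((1:ℝ)/4) ≠ 0 := by positivity
  field_simp

/-! ### Kernel representation at fixed `t` -/

lemma kernel_repr {A B : Matrix (Fin p) (Fin p) ℝ} (hA : A.PosDef) (hB : B.PosDef)
    {t : ℝ} (ht : 0 < t) (a b : Fin p → ℝ) :
    phiFactor A B * rexp (-(Qform A B (a - b)) / t ^ 2)
      = ((((2:ℝ)^p * (2/t^2)^p) ^ ((1:ℝ)/2)) / Jp p)
        * (A.det ^ (-(1:ℝ)/4) * B.det ^ (-(1:ℝ)/4))
        * ∫ u : Fin p → ℝ, rexp (-((u - a) ⬝ᵥ ((2/t^2) • A⁻¹) *ᵥ (u - a)))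
            * rexp (-((u - b) ⬝ᵥ ((2/t^2) • B⁻¹) *ᵥ (u - b))) := by
  set c := 2/t^2 with hcdef
  have hc : 0 < c := by positivity
  have hMA : (c • A⁻¹).PosDef := posDef_smul hc hA.inv
  have hMB : (c • B⁻¹).PosDef := posDef_smul hc hB.inv
  rw [gauss_prod_integral hMA hMB a b, scaled_C hA hB hc, scaled_det hA hB hc]
  have hq : (a - b) ⬝ᵥ (c • (A + B)⁻¹) *ᵥ (a - b)
      = c * ((a - b) ⬝ᵥ (A + B)⁻¹ *ᵥ (a - b)) := by
    rw [smul_mulVec, dotProduct_smul, smul_eq_mul]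
  rw [hq, Qform_eq hA hB]
  set r := (a - b) ⬝ᵥ (A + B)⁻¹ *ᵥ (a - b) with hrdef
  have hexp : -(2 * r) / t ^ 2 = -(c * r) := by
    rw [hcdef]; field_simp
  rw [hexp, phiFactor, Matrix.det_smul, Fintype.card_fin]
  exact rpow_arith p hA.det_pos hB.det_pos (hA.add hB).det_pos Jp_pos hc _

/-! ### Positivity of the kernel matrix at fixed `t` -/

lemma F_nonneg {n : ℕ} {t : ℝ} (ht : 0 < t) (A : Fin n → Matrix (Fin p) (Fin p) ℝ)
    (hA : ∀ i, (A i).PosDef) (y : Fin n → (Fin p → ℝ)) (d : Fin n → ℝ) :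
    0 ≤ ∑ i : Fin n, ∑ j : Fin n,
      d i * d j * (phiFactor (A i) (A j) * rexp (-(Qform (A i) (A j) (y i - y j)) / t ^ 2)) := by
  have hc : 0 < 2/t^2 := by positivity
  have hκ : 0 ≤ (((2:ℝ)^p * (2/t^2)^p) ^ ((1:ℝ)/2)) / Jp p :=
    div_nonneg (Real.rpow_nonneg (by positivity) _) Jp_pos.le
  have hMi : ∀ i, ((2/t^2) • (A i)⁻¹).PosDef := fun i => posDef_smul hc (hA i).inv
  have hIij : ∀ i j : Fin n, Integrable (fun u : Fin p → ℝ =>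
      (d i * (A i).det ^ (-(1:ℝ)/4) * rexp (-((u - y i) ⬝ᵥ ((2/t^2) • (A i)⁻¹) *ᵥ (u - y i))))
        * (d j * (A j).det ^ (-(1:ℝ)/4)
            * rexp (-((u - y j) ⬝ᵥ ((2/t^2) • (A j)⁻¹) *ᵥ (u - y j))))) := by
    intro i j
    have h0 := gauss_prod_integrable (hMi i) (hMi j) (y i) (y j)
    have h1 := h0.const_mul ((d i * (A i).det ^ (-(1:ℝ)/4)) * (d j * (A j).det ^ (-(1:ℝ)/4)))
    refine h1.congr ?_
    filter_upwards with u
    ring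
  have hterm : ∀ i j : Fin n,
      d i * d j * (phiFactor (A i) (A j) * rexp (-(Qform (A i) (A j) (y i - y j)) / t ^ 2))
        = ((((2:ℝ)^p * (2/t^2)^p) ^ ((1:ℝ)/2)) / Jp p)
          * ∫ u : Fin p → ℝ,
              (d i * (A i).det ^ (-(1:ℝ)/4)
                * rexp (-((u - y i) ⬝ᵥ ((2/t^2) • (A i)⁻¹) *ᵥ (u - y i))))
              * (d j * (A j).det ^ (-(1:ℝ)/4)
                * rexp (-((u - y j) ⬝ᵥ ((2/t^2) • (A j)⁻¹) *ᵥ (u - y j)))) := by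
    intro i j
    have h := kernel_repr (hA i) (hA j) ht (y i) (y j)
    have h2 : ∫ u : Fin p → ℝ,
            (d i * (A i).det ^ (-(1:ℝ)/4)
              * rexp (-((u - y i) ⬝ᵥ ((2/t^2) • (A i)⁻¹) *ᵥ (u - y i))))
            * (d j * (A j).det ^ (-(1:ℝ)/4)
              * rexp (-((u - y j) ⬝ᵥ ((2/t^2) • (A j)⁻¹) *ᵥ (u - y j))))
        = ((d i * (A i).det ^ (-(1:ℝ)/4)) * (d j * (A j).det ^ (-(1:ℝ)/4)))
          * ∫ u : Fin p → ℝ,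
              rexp (-((u - y i) ⬝ᵥ ((2/t^2) • (A i)⁻¹) *ᵥ (u - y i)))
              * rexp (-((u - y j) ⬝ᵥ ((2/t^2) • (A j)⁻¹) *ᵥ (u - y j))) := by
      rw [← integral_const_mul]
      congr 1
      funext u
      ring
    rw [h2]
    linear_combination (d i * d j) * h
  have hsum : ∑ i : Fin n, ∑ j : Fin n,
        d i * d j * (phiFactor (A i) (A j) * rexp (-(Qform (A i) (A j) (y i - y j)) / t ^ 2))
      = ((((2:ℝ)^p * (2/t^2)^p) ^ ((1:ℝ)/2)) / Jp p)
        * ∫ u : Fin p → ℝ, (∑ i : Fin n, d i * (A i).det ^ (-(1:ℝ)/4)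
            * rexp (-((u - y i) ⬝ᵥ ((2/t^2) • (A i)⁻¹) *ᵥ (u - y i)))) ^ 2 := by
    have hsq : ∀ u : Fin p → ℝ,
        (∑ i : Fin n, d i * (A i).det ^ (-(1:ℝ)/4)
            * rexp (-((u - y i) ⬝ᵥ ((2/t^2) • (A i)⁻¹) *ᵥ (u - y i)))) ^ 2
          = ∑ i : Fin n, ∑ j : Fin n,
              (d i * (A i).det ^ (-(1:ℝ)/4)
                * rexp (-((u - y i) ⬝ᵥ ((2/t^2) • (A i)⁻¹) *ᵥ (u - y i))))
              * (d j * (A j).det ^ (-(1:ℝ)/4)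
                * rexp (-((u - y j) ⬝ᵥ ((2/t^2) • (A j)⁻¹) *ᵥ (u - y j)))) := by
      intro u
      rw [sq, Finset.sum_mul_sum]
    simp_rw [hsq]
    rw [integral_finset_sum _ (fun i _ => integrable_finset_sum _ (fun j _ => hIij i j))]
    rw [Finset.mul_sum]
    refine Finset.sum_congr rfl (fun i _ => ?_)
    rw [integral_finset_sum _ (fun j _ => hIij i j), Finset.mul_sum]
    exact Finset.sum_congr rfl (fun j _ => hterm i j)
  rw [hsum]
  exact mul_nonneg hκ (integral_nonneg (fun u => sq_nonneg _))

end NSAux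

open NSAux in
/-- the non-stationary covariance
`C^{NS}(x,y) = σ(x)σ(y) φ_xy ∫_0^∞ exp(−Q_xy(x−y)/t²) ξ(dt)` is positive semidefinite. -/
theorem nonstationary_covariance_posSemidef (p : ℕ) (hp : 1 ≤ p)
    (S : (Fin p → ℝ) → Matrix (Fin p) (Fin p) ℝ) (hS : ∀ x, (S x).PosDef)
    (ξ : Measure ℝ) [IsFiniteMeasure ξ] (σ : (Fin p → ℝ) → ℝ) :
    ∀ (n : ℕ) (x : Fin n → (Fin p → ℝ)) (c : Fin n → ℝ),
      0 ≤ ∑ i : Fin n, ∑ j : Fin n,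
        c i * c j * (σ (x i) * σ (x j) * phiFactor (S (x i)) (S (x j)) *
          ∫ t in Set.Ioi (0:ℝ),
            Real.exp (-(Qform (S (x i)) (S (x j)) (x i - x j)) / t ^ 2) ∂ξ) := by
  intro n x c
  have hInt : ∀ i j : Fin n, Integrable
      (fun t : ℝ => rexp (-(Qform (S (x i)) (S (x j)) (x i - x j)) / t ^ 2))
      (ξ.restrict (Set.Ioi 0)) := by
    intro i j
    refine Integrable.mono' (integrable_const 1) ?_ ?_
    · refine (Measurable.aestronglyMeasurable ?_)
      exact (measurable_const.div ((measurable_id.pow_const 2))).exp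
    · rw [ae_restrict_iff' measurableSet_Ioi]
      filter_upwards with t ht
      have ht2 : (0:ℝ) < t ^ 2 := pow_pos (Set.mem_Ioi.mp ht) 2
      have hQ : 0 ≤ Qform (S (x i)) (S (x j)) (x i - x j) :=
        Qform_nonneg (hS (x i)) (hS (x j)) _
      rw [Real.norm_eq_abs, Real.abs_exp, Real.exp_le_one_iff]
      exact div_nonpos_of_nonpos_of_nonneg (by linarith) ht2.le
  have hswap : ∑ i : Fin n, ∑ j : Fin n,
        c i * c j * (σ (x i) * σ (x j) * phiFactor (S (x i)) (S (x j)) *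
          ∫ t in Set.Ioi (0:ℝ),
            rexp (-(Qform (S (x i)) (S (x j)) (x i - x j)) / t ^ 2) ∂ξ)
      = ∫ t in Set.Ioi (0:ℝ), (∑ i : Fin n, ∑ j : Fin n,
          ((c i * σ (x i)) * (c j * σ (x j)) * phiFactor (S (x i)) (S (x j))) *
            rexp (-(Qform (S (x i)) (S (x j)) (x i - x j)) / t ^ 2)) ∂ξ := by
    have h1 : ∀ i j : Fin n,
        c i * c j * (σ (x i) * σ (x j) * phiFactor (S (x i)) (S (x j)) *
            ∫ t in Set.Ioi (0:ℝ),
              rexp (-(Qform (S (x i)) (S (x j)) (x i - x j)) / t ^ 2) ∂ξ)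
          = ∫ t in Set.Ioi (0:ℝ),
              ((c i * σ (x i)) * (c j * σ (x j)) * phiFactor (S (x i)) (S (x j))) *
                rexp (-(Qform (S (x i)) (S (x j)) (x i - x j)) / t ^ 2) ∂ξ := by
      intro i j
      have h2 : ∫ t in Set.Ioi (0:ℝ),
            ((c i * σ (x i)) * (c j * σ (x j)) * phiFactor (S (x i)) (S (x j))) *
              rexp (-(Qform (S (x i)) (S (x j)) (x i - x j)) / t ^ 2) ∂ξ
          = ((c i * σ (x i)) * (c j * σ (x j)) * phiFactor (S (x i)) (S (x j)))
            * ∫ t in Set.Ioi (0:ℝ),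
                rexp (-(Qform (S (x i)) (S (x j)) (x i - x j)) / t ^ 2) ∂ξ :=
        integral_const_mul _ _
      rw [h2]
      ring
    calc ∑ i : Fin n, ∑ j : Fin n,
        c i * c j * (σ (x i) * σ (x j) * phiFactor (S (x i)) (S (x j)) *
          ∫ t in Set.Ioi (0:ℝ),
            rexp (-(Qform (S (x i)) (S (x j)) (x i - x j)) / t ^ 2) ∂ξ)
        = ∑ i : Fin n, ∑ j : Fin n, ∫ t in Set.Ioi (0:ℝ),
              ((c i * σ (x i)) * (c j * σ (x j)) * phiFactor (S (x i)) (S (x j))) *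
                rexp (-(Qform (S (x i)) (S (x j)) (x i - x j)) / t ^ 2) ∂ξ :=
          Finset.sum_congr rfl (fun i _ => Finset.sum_congr rfl (fun j _ => h1 i j))
      _ = ∑ i : Fin n, ∫ t in Set.Ioi (0:ℝ), (∑ j : Fin n,
              ((c i * σ (x i)) * (c j * σ (x j)) * phiFactor (S (x i)) (S (x j))) *
                rexp (-(Qform (S (x i)) (S (x j)) (x i - x j)) / t ^ 2)) ∂ξ :=
          Finset.sum_congr rfl (fun i _ =>
            (integral_finset_sum _ (fun j _ => ((hInt i j).const_mul _))).symm)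
      _ = ∫ t in Set.Ioi (0:ℝ), (∑ i : Fin n, ∑ j : Fin n,
              ((c i * σ (x i)) * (c j * σ (x j)) * phiFactor (S (x i)) (S (x j))) *
                rexp (-(Qform (S (x i)) (S (x j)) (x i - x j)) / t ^ 2)) ∂ξ :=
          (integral_finset_sum _ (fun i _ => integrable_finset_sum _ (fun j _ =>
            ((hInt i j).const_mul _)))).symm
  rw [hswap]
  refine setIntegral_nonneg measurableSet_Ioi (fun t ht => ?_)
  refine le_trans (F_nonneg (Set.mem_Ioi.mp ht) (fun i => S (x i)) (fun i => hS (x i)) x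
    (fun i => c i * σ (x i))) (le_of_eq ?_)
  exact Finset.sum_congr rfl (fun i _ => Finset.sum_congr rfl (fun j _ => by ring))
end
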